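/- Let f : ℝ → ℝ be a differentiable function such that f(b) - f(a) = (b - a)·f'((a + b)/2) for all a, b ∈ ℝ. Then f is a quadratic polynomial, i.e., there exist constants c₁, c₂, c₃ ∈ ℝ such that f(x) = c₁·x² + c₂·x + c₃ for all x ∈ ℝ. -/

import Mathlib

theorem stmt_13 (f : ℝ → ℝ) (hdiff : Differentiable ℝ f)
    (hfde : ∀ a b : ℝ, f b - f a = (b - a) * deriv f ((a + b) / 2)) :
    ∃ c₁ c₂ c₃ : ℝ, ∀ x : ℝ, f x = c₁ * x ^ 2 + c₂ * x + c₃ := by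
  set g := deriv f with hg
  -- g is differentiable
  have hgeq : g = fun x => (f (x + 1) - f (x - 1)) / 2 := by
    funext x
    have h := hfde (x - 1) (x + 1)
    have h2 : ((x - 1) + (x + 1)) / 2 = x := by ring
    rw [h2] at h
    linarith [h]
  have hgdiff : Differentiable ℝ g := by
    rw [hgeq]
    exact (((hdiff.comp (differentiable_id.add_const 1)).sub
      (hdiff.comp (differentiable_id.sub_const 1))).div_const 2)
  -- differentiate the functional equation in b
  have key : ∀ a b : ℝ, g b = g ((a + b) / 2) + (b - a) * (deriv g ((a + b) / 2) * (1 / 2)) := by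
    intro a b
    have hinner : HasDerivAt (fun t : ℝ => (a + t) / 2) (1 / 2) b := by
      simpa using ((hasDerivAt_id b).const_add a).div_const 2
    have h2 : HasDerivAt (fun t : ℝ => g ((a + t) / 2))
        (deriv g ((a + b) / 2) * (1 / 2)) b :=
      by
        have hd : HasDerivAt g (deriv g ((a + b) / 2)) ((fun t : ℝ => (a + t) / 2) b) :=
          (hgdiff ((a + b) / 2)).hasDerivAt
        exact hd.comp b hinner
    have h1 : HasDerivAt (fun t : ℝ => t - a) 1 b := (hasDerivAt_id b).sub_const a
    have hG : HasDerivAt (fun t : ℝ => (t - a) * g ((a + t) / 2))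
        (1 * g ((a + b) / 2) + (b - a) * (deriv g ((a + b) / 2) * (1 / 2))) b := h1.mul h2
    have hF : HasDerivAt (fun t : ℝ => f t - f a) (g b) b :=
      (hdiff b).hasDerivAt.sub_const (f a)
    have hfun : (fun t : ℝ => f t - f a) = fun t : ℝ => (t - a) * g ((a + t) / 2) := by
      funext t; exact hfde a t
    rw [hfun] at hF
    have := hF.unique hG
    linarith [this]
  -- g is affine
  have haff : ∀ x : ℝ, g x = g 0 + x * deriv g 0 := by
    intro x
    have h := key (-x) x
    have h0 : ((-x) + x) / 2 = 0 := by ring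
    rw [h0] at h
    linarith [h]
  -- conclude
  refine ⟨deriv g 0 / 2, g 0, f 0, fun x => ?_⟩
  have h := hfde 0 x
  have h2 : (0 + x) / 2 = x / 2 := by ring
  rw [h2] at h
  rw [haff (x / 2)] at h
  ring_nf
  ring_nf at h
  linarith [h]
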